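/- For every m ≥ 2, the map string 0X1^{m-1}0 is an injective pattern: the function e : ℤ → ZMod 2 with left radius L = 1 and right radius R = m given by e(-1) = 0, e(j) = 1 for 1 ≤ j ≤ m - 1, and e(m) = 0 satisfies the injective pattern condition; consequently its induced global transformation τ_e is injective. -/
import Mathlib


/-- `c` matches the pattern `e` (with radii `L`, `R`, wildcard at position 0) at `n`. -/
def Matches (L R : ℕ) (e : ℤ → ZMod 2) (c : ℤ → ZMod 2) (n : ℤ) : Prop :=
  ∀ j : ℤ, -(L : ℤ) ≤ j → j ≤ (R : ℤ) → j ≠ 0 → c (n + j) = e j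

/-- `e` is an injective pattern for radii `L`, `R`: every prefix sub-string containing
the wildcard differs from the suffix sub-string of the same length. -/
def IsInjectivePattern (L R : ℕ) (e : ℤ → ZMod 2) : Prop :=
  ∀ s : ℤ, 1 ≤ s → s ≤ (R : ℤ) →
    ∃ j : ℤ, -(L : ℤ) ≤ j ∧ j ≤ (R : ℤ) - s ∧ j ≠ 0 ∧ j + s ≠ 0 ∧ e j ≠ e (j + s)

open Classical in
/-- The global transformation induced by the pattern `e`. -/
noncomputable def tau (L R : ℕ) (e : ℤ → ZMod 2) (c : ℤ → ZMod 2) : ℤ → ZMod 2 :=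
  fun n => if Matches L R e c n then 1 + c n else c n

lemma tau_of_not {L R : ℕ} {e c : ℤ → ZMod 2} {n : ℤ} (h : ¬ Matches L R e c n) :
    tau L R e c n = c n := by
  simp only [tau]; rw [if_neg h]

lemma tau_of_pos {L R : ℕ} {e c : ℤ → ZMod 2} {n : ℤ} (h : Matches L R e c n) :
    tau L R e c n = 1 + c n := by
  simp only [tau]; rw [if_pos h]

/-- No two matches at positive distance `s ≤ R`. -/
lemma noTwoPos {L R : ℕ} {e : ℤ → ZMod 2} (hinj : IsInjectivePattern L R e)
    {c : ℤ → ZMod 2} {n s : ℤ} (hs1 : 1 ≤ s) (hs2 : s ≤ (R : ℤ))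
    (h : Matches L R e c n) (h' : Matches L R e c (n + s)) : False := by
  obtain ⟨j, hj1, hj2, hj0, hjs0, hne⟩ := hinj s hs1 hs2
  have e1 : c (n + s + j) = e j := h' j hj1 (by omega) hj0
  have e2 : c (n + (j + s)) = e (j + s) := h (j + s) (by omega) (by omega) hjs0
  apply hne
  rw [← e1, ← e2]
  congr 1; ring

/-- No two distinct matches within the window. -/
lemma noTwo {L R : ℕ} {e : ℤ → ZMod 2} (hLR : (L : ℤ) ≤ (R : ℤ))
    (hinj : IsInjectivePattern L R e)
    {c : ℤ → ZMod 2} {n n' : ℤ} (h : Matches L R e c n) (h' : Matches L R e c n')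
    (hne : n ≠ n') (hd1 : -(L : ℤ) ≤ n' - n) (hd2 : n' - n ≤ (R : ℤ)) : False := by
  by_cases hs : 1 ≤ n' - n
  · have := noTwoPos hinj hs hd2 h (by
      have : n + (n' - n) = n' := by ring
      rw [this]; exact h')
    exact this
  · have hs' : 1 ≤ n - n' := by omega
    exact noTwoPos hinj hs' (by omega) h' (by
      have : n' + (n - n') = n := by ring
      rw [this]; exact h)

lemma matches_tau_iff {L R : ℕ} {e : ℤ → ZMod 2} (hLR : (L : ℤ) ≤ (R : ℤ))
    (hinj : IsInjectivePattern L R e) (c : ℤ → ZMod 2) (n : ℤ) :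
    Matches L R e (tau L R e c) n ↔ Matches L R e c n := by
  constructor
  · intro h
    by_contra hc
    simp only [Matches, not_forall] at hc
    obtain ⟨j0, hj01, hj02, hj00, hcne⟩ := hc
    have htau : tau L R e c (n + j0) = e j0 := h j0 hj01 hj02 hj00
    have hM : Matches L R e c (n + j0) := by
      by_contra hnM
      rw [tau_of_not hnM] at htau
      exact hcne htau
    -- n + j0 is matched in c; compare window of c-match at n+j0 vs tau-match at n
    by_cases hpos : 1 ≤ j0
    · obtain ⟨j, hj1, hj2, hj0', hjs0, hne⟩ := hinj j0 hpos hj02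
      have e1 : c (n + j0 + j) = e j := hM j hj1 (by omega) hj0'
      have e2 : tau L R e c (n + (j + j0)) = e (j + j0) :=
        h (j + j0) (by omega) (by omega) hjs0
      have hnM2 : ¬ Matches L R e c (n + j0 + j) := by
        intro h2
        exact noTwo hLR hinj hM h2 (by omega) (by omega) (by omega)
      have : tau L R e c (n + (j + j0)) = c (n + j0 + j) := by
        have hx : n + (j + j0) = n + j0 + j := by ring
        rw [hx, tau_of_not hnM2]
      rw [this, e1] at e2
      exact hne e2
    · have hs1 : 1 ≤ -j0 := by omega
      obtain ⟨j, hj1, hj2, hj0', hjs0, hne⟩ := hinj (-j0) hs1 (by omega)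
      have e1 : c (n + j0 + (j + -j0)) = e (j + -j0) :=
        hM (j + -j0) (by omega) (by omega) hjs0
      have e2 : tau L R e c (n + j) = e j := h j (by omega) (by omega) hj0'
      have hnM2 : ¬ Matches L R e c (n + j) := by
        intro h2
        exact noTwo hLR hinj hM h2 (by omega) (by omega) (by omega)
      have : tau L R e c (n + j) = c (n + j0 + (j + -j0)) := by
        have hx : n + j0 + (j + -j0) = n + j := by ring
        rw [hx, tau_of_not hnM2]
      rw [this, e1] at e2
      exact hne e2.symm
  · intro h j hj1 hj2 hj0
    have hnM : ¬ Matches L R e c (n + j) := by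
      intro h2
      exact noTwo hLR hinj h h2 (by omega) (by omega) (by omega)
    rw [tau_of_not hnM]
    exact h j hj1 hj2 hj0

lemma tau_involutive {L R : ℕ} {e : ℤ → ZMod 2} (hLR : (L : ℤ) ≤ (R : ℤ))
    (hinj : IsInjectivePattern L R e) (c : ℤ → ZMod 2) :
    tau L R e (tau L R e c) = c := by
  funext n
  by_cases h : Matches L R e c n
  · rw [tau_of_pos ((matches_tau_iff hLR hinj c n).mpr h), tau_of_pos h]
    have : (1 : ZMod 2) + 1 = 0 := by decide
    rw [← add_assoc, this, zero_add]
  · rw [tau_of_not (fun h2 => h ((matches_tau_iff hLR hinj c n).mp h2)), tau_of_not h]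

/-- for every `m ≥ 2`, the map string `0X1^(m-1)0` (left radius 1,
right radius `m`) is an injective pattern, and its induced global transformation is
injective. -/
theorem zero_X_ones_zero_injective (m : ℕ) (hm : 2 ≤ m) (e : ℤ → ZMod 2)
    (he1 : e (-1) = 0)
    (he2 : ∀ j : ℤ, 1 ≤ j → j ≤ (m : ℤ) - 1 → e j = 1)
    (he3 : e (m : ℤ) = 0) :
    IsInjectivePattern 1 m e ∧ Function.Injective (tau 1 m e) := by
  have hm' : (2 : ℤ) ≤ (m : ℤ) := by exact_mod_cast hm
  have hinj : IsInjectivePattern 1 m e := by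
    intro s hs1 hs2
    by_cases hsm : s = (m : ℤ)
    · refine ⟨-1, by norm_num, by omega, by norm_num, by omega, ?_⟩
      have : e (-1 + s) = 1 := he2 _ (by omega) (by omega)
      rw [he1, this]
      exact zero_ne_one
    · refine ⟨(m : ℤ) - s, by omega, by omega, by omega, by omega, ?_⟩
      have hx : (m : ℤ) - s + s = (m : ℤ) := by ring
      rw [hx, he3, he2 _ (by omega) (by omega)]
      exact one_ne_zero
  have hLR : ((1 : ℕ) : ℤ) ≤ (m : ℤ) := by omega
  exact ⟨hinj, Function.LeftInverse.injective (tau_involutive hLR hinj)⟩
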